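/- arXiv:1005.1304 — 2 statements merged into one kernel-verified Lean document; each statement's English description precedes it below -/
import Mathlib

section
/- Let ε_R : R → T ← S : ε_S be surjective homomorphisms of commutative noetherian local rings with common residue field k, and let P = R ×_T S with maximal ideal 𝔭. Then edim(R ×_T S) ≥ edim R + edim S − edim T, where edim denotes the minimal number of generators of the maximal ideal. -/
open RingTheory.Sequence Function

noncomputable section

/-- The fiber product `R ×_T S` as a subring of `R × S`. -/
def fiberProd {R S T : Type*} [CommRing R] [CommRing S] [CommRing T]
    (f : R →+* T) (g : S →+* T) : Subring (R × S) :=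
  RingHom.eqLocus (f.comp (RingHom.fst R S)) (g.comp (RingHom.snd R S))

/-- Length of a module: the Krull dimension of its lattice of submodules. -/
noncomputable def lenE (R M : Type*) [CommRing R] [AddCommGroup M] [Module R M] : ℕ∞ :=
  (Order.krullDim (Submodule R M)).unbotD 0

/-- Depth of a local ring: supremum of lengths of regular sequences of nonunits. -/
noncomputable def rdepth (Q : Type*) [CommRing Q] : ℕ∞ :=
  sSup {n : ℕ∞ | ∃ rs : List Q, (∀ x ∈ rs, x ∈ nonunits Q) ∧
    RingTheory.Sequence.IsRegular Q rs ∧ (rs.length : ℕ∞) = n}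

/-- A local ring is Cohen-Macaulay if its depth equals its Krull dimension. -/
def IsCMRing (Q : Type*) [CommRing Q] : Prop :=
  (rdepth Q : WithBot ℕ∞) = ringKrullDim Q

/-- Cohen-Macaulay local ring of dimension `d`. -/
def IsCMOfDim (Q : Type*) [CommRing Q] (d : ℕ) : Prop :=
  ringKrullDim Q = ((d : ℕ∞) : WithBot ℕ∞) ∧ rdepth Q = d

/-- The socle of a module over a local ring: largest submodule killed by the maximal ideal
(= set of nonunits). -/
noncomputable def socle (Q M : Type*) [CommRing Q] [AddCommGroup M] [Module Q M] :
    Submodule Q M :=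
  sSup {N : Submodule Q M | ∀ r ∈ nonunits Q, ∀ x ∈ N, r • x = 0}

/-- A local ring is Gorenstein if it is Cohen-Macaulay (there is a maximal regular
sequence of length its Krull dimension) and of type one, i.e. the socle of the artinian
reduction is a simple module. -/
def IsGorensteinRing (Q : Type*) [CommRing Q] : Prop :=
  ∃ rs : List Q, (∀ x ∈ rs, x ∈ nonunits Q) ∧ RingTheory.Sequence.IsRegular Q rs ∧
    ((rs.length : ℕ∞) : WithBot ℕ∞) = ringKrullDim Q ∧
    IsSimpleModule Q (socle Q (Q ⧸ (Ideal.ofList rs)))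

/-- Gorenstein local ring of dimension `d`. -/
def IsGorensteinOfDim (Q : Type*) [CommRing Q] (d : ℕ) : Prop :=
  ringKrullDim Q = ((d : ℕ∞) : WithBot ℕ∞) ∧ ∃ rs : List Q, (∀ x ∈ rs, x ∈ nonunits Q) ∧
    RingTheory.Sequence.IsRegular Q rs ∧ rs.length = d ∧
    IsSimpleModule Q (socle Q (Q ⧸ (Ideal.ofList rs)))

/-- The embedding dimension: minimal number of generators of the maximal ideal
(the ideal of nonunits). -/
noncomputable def edim (Q : Type*) [CommRing Q] : ℕ :=
  sInf {n : ℕ | ∃ s : Finset Q, s.card = n ∧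
    ((Ideal.span (s : Set Q) : Ideal Q) : Set Q) = nonunits Q}

open Submodule Module IsLocalRing

section StmtAux

theorem span_carrier_eq_of_surjective {A B M : Type*} [CommRing A] [CommRing B] [AddCommGroup M]
    [Module A M] [Module B M] (σ : A →+* B) (hσ : Function.Surjective σ)
    (hsmul : ∀ (a : A) (m : M), a • m = σ a • m) (X : Set M) :
    ((Submodule.span A X : Submodule A M) : Set M)
      = ((Submodule.span B X : Submodule B M) : Set M) := by
  let NA : Submodule A M :=
    { carrier := (Submodule.span B X : Set M)
      add_mem' := fun h h' => Submodule.add_mem _ h h'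
      zero_mem' := Submodule.zero_mem _
      smul_mem' := fun a m hm => by
        show a • m ∈ Submodule.span B X
        rw [hsmul]
        exact Submodule.smul_mem _ (σ a) hm }
  let NB : Submodule B M :=
    { carrier := (Submodule.span A X : Set M)
      add_mem' := fun h h' => Submodule.add_mem _ h h'
      zero_mem' := Submodule.zero_mem _
      smul_mem' := fun b m hm => by
        obtain ⟨a, rfl⟩ := hσ b
        show (σ a) • m ∈ Submodule.span A X
        rw [← hsmul]
        exact Submodule.smul_mem _ a hm }
  apply le_antisymm
  · exact (Submodule.span_le (p := NA)).2 Submodule.subset_span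
  · exact (Submodule.span_le (p := NB)).2 Submodule.subset_span

theorem mem_span_transfer {A B M : Type*} [CommRing A] [CommRing B] [AddCommGroup M]
    [Module A M] [Module B M] (σ : A →+* B) (hσ : Function.Surjective σ)
    (hsmul : ∀ (a : A) (m : M), a • m = σ a • m) (X : Set M) (x : M) :
    x ∈ Submodule.span A X ↔ x ∈ Submodule.span B X := by
  have h := span_carrier_eq_of_surjective σ hσ hsmul X
  constructor
  · intro hx
    have : x ∈ ((Submodule.span A X : Submodule A M) : Set M) := hx
    rw [h] at this; exact this
  · intro hx
    have : x ∈ ((Submodule.span B X : Submodule B M) : Set M) := hx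
    rw [← h] at this; exact this

theorem span_top_transfer {A B M : Type*} [CommRing A] [CommRing B] [AddCommGroup M]
    [Module A M] [Module B M] (σ : A →+* B) (hσ : Function.Surjective σ)
    (hsmul : ∀ (a : A) (m : M), a • m = σ a • m) (X : Set M) :
    Submodule.span A X = ⊤ ↔ Submodule.span B X = ⊤ := by
  constructor <;> intro h <;> apply Submodule.eq_top_iff'.2 <;> intro x
  · exact (mem_span_transfer σ hσ hsmul X x).1 (h ▸ Submodule.mem_top)
  · exact (mem_span_transfer σ hσ hsmul X x).2 (h ▸ Submodule.mem_top)

theorem moduleFinite_transfer {A B M : Type*} [CommRing A] [CommRing B] [AddCommGroup M]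
    [Module A M] [Module B M] (σ : A →+* B) (hσ : Function.Surjective σ)
    (hsmul : ∀ (a : A) (m : M), a • m = σ a • m) [Module.Finite B M] : Module.Finite A M := by
  obtain ⟨G, hG⟩ := Module.Finite.fg_top (R := B) (M := M)
  exact ⟨⟨G, (span_top_transfer σ hσ hsmul (G : Set M)).2 hG⟩⟩

theorem la2' {κ W : Type*} [Field κ] [AddCommGroup W] [Module κ W] [FiniteDimensional κ W]
    (K U : Submodule κ W) (h : K ⊔ U = ⊤) : finrank κ W ≤ finrank κ K + finrank κ U := by
  have h1 := Submodule.finrank_sup_add_finrank_inf_eq K U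
  have h2 : finrank κ ↥(K ⊔ U) = finrank κ W := by rw [h]; exact finrank_top κ W
  omega

theorem la1' {κ V W : Type*} [Field κ] [AddCommGroup V] [Module κ V] [AddCommGroup W] [Module κ W]
    [FiniteDimensional κ V] [FiniteDimensional κ W] {ι : Type*} [Fintype ι]
    (v : ι → V × W) (K : Submodule κ W)
    (h1 : Submodule.map (LinearMap.fst κ V W) (Submodule.span κ (Set.range v)) = ⊤)
    (h2 : ∀ w ∈ K, ((0 : V), w) ∈ Submodule.span κ (Set.range v)) :
    finrank κ V + finrank κ K ≤ Fintype.card ι := by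
  set Sg := Submodule.span κ (Set.range v) with hSg
  have hcard : finrank κ Sg ≤ Fintype.card ι := finrank_range_le_card v
  let f : Sg →ₗ[κ] V := (LinearMap.fst κ V W).comp Sg.subtype
  have hrank := LinearMap.finrank_range_add_finrank_ker f
  have hrange : LinearMap.range f = ⊤ := by
    rw [LinearMap.range_comp, Submodule.range_subtype]
    exact h1
  have hrfr : finrank κ (LinearMap.range f) = finrank κ V := by rw [hrange]; exact finrank_top κ V
  let g : K →ₗ[κ] LinearMap.ker f :=
    { toFun := fun w => ⟨⟨((0 : V), (w : W)), h2 w w.2⟩, by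
        simp only [LinearMap.mem_ker]
        rfl⟩
      map_add' := fun w w' => by
        apply Subtype.ext; apply Subtype.ext
        simp [Prod.ext_iff]
      map_smul' := fun c w => by
        apply Subtype.ext; apply Subtype.ext
        simp [Prod.ext_iff] }
  have hginj : Function.Injective g := by
    intro w w' hww
    apply Subtype.ext
    have : (((g w : Sg) : V × W)).2 = (((g w' : Sg) : V × W)).2 := by rw [hww]
    exact this
  have hK : finrank κ K ≤ finrank κ (LinearMap.ker f) :=
    LinearMap.finrank_le_finrank_of_injective hginj
  omega

theorem isUnit_of_isUnit_map' {A B : Type*} [CommRing A] [CommRing B] [IsLocalRing A]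
    [IsLocalRing B] (f : A →+* B) (hf : Function.Surjective f) {a : A} (h : IsUnit (f a)) :
    IsUnit a := by
  obtain ⟨u, hu⟩ := h
  obtain ⟨c, hc⟩ := hf (↑u⁻¹ : B)
  have h1 : f (a * c) = 1 := by rw [map_mul, ← hu, hc, u.mul_inv]
  rcases IsLocalRing.isUnit_or_isUnit_one_sub_self (a * c) with h2 | h2
  · exact isUnit_of_mul_isUnit_left h2
  · exfalso
    have h3 : f (1 - a * c) = 0 := by rw [map_sub, map_one, h1, sub_self]
    have h4 : IsUnit (0 : B) := h3 ▸ h2.map f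
    exact zero_ne_one (isUnit_zero_iff.1 h4)

theorem span_val_image_eq {Q : Type*} [CommRing Q] (I : Ideal Q) (X : Set ↥I) :
    Ideal.span (Subtype.val '' X) = Submodule.map I.subtype (Submodule.span Q X) := by
  rw [Submodule.map_span, Ideal.submodule_span_eq]
  rfl

theorem mem_span_subtype' {Q : Type*} [CommRing Q] (I : Ideal Q) (X : Set ↥I) (z : ↥I) :
    z ∈ Submodule.span Q X ↔ (z : Q) ∈ Ideal.span (Subtype.val '' X) := by
  rw [span_val_image_eq]
  constructor
  · intro h
    exact ⟨z, h, rfl⟩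
  · rintro ⟨x, hx, hxz⟩
    have : x = z := Subtype.ext hxz
    exact this ▸ hx

theorem span_subtype_top_iff' {Q : Type*} [CommRing Q] (I : Ideal Q) (X : Set ↥I) :
    Submodule.span Q X = ⊤ ↔ Ideal.span (Subtype.val '' X) = I := by
  rw [span_val_image_eq]
  constructor
  · intro h; rw [h, Submodule.map_subtype_top]
  · intro h
    apply Submodule.map_injective_of_injective (Submodule.injective_subtype I)
    rw [h, Submodule.map_subtype_top]

theorem nonunits_eq_coe_maximalIdeal (Q : Type*) [CommRing Q] [IsLocalRing Q] :
    nonunits Q = ((maximalIdeal Q : Ideal Q) : Set Q) :=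
  (Set.ext fun x => (IsLocalRing.mem_maximalIdeal x)).symm

/-- `edim ≤ finrank` of the cotangent space over a field acting through a surjection onto
the residue field. -/
theorem edim_le_finrank_compat {Q κ : Type*} [CommRing Q] [IsLocalRing Q] [IsNoetherianRing Q]
    [Field κ] [Module κ (CotangentSpace Q)] (σ : κ →+* ResidueField Q)
    (hσ : Function.Surjective σ)
    (hsmul : ∀ (c : κ) (w : CotangentSpace Q), c • w = σ c • w) :
    edim Q ≤ finrank κ (CotangentSpace Q) := by
  classical
  haveI : Module.Finite κ (CotangentSpace Q) := moduleFinite_transfer σ hσ hsmul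
  let b : Basis (Fin (finrank κ (CotangentSpace Q))) κ (CotangentSpace Q) :=
    Module.finBasis κ (CotangentSpace Q)
  choose y hy using fun i => (maximalIdeal Q).toCotangent_surjective (b i)
  let s : Finset Q := Finset.image (fun i => ((y i : Q))) Finset.univ
  have hcard : s.card ≤ finrank κ (CotangentSpace Q) :=
    le_trans Finset.card_image_le (by simp)
  have hrange : (maximalIdeal Q).toCotangent '' (Set.range y) = Set.range ⇑b := by
    ext w
    constructor
    · rintro ⟨z, ⟨i, rfl⟩, rfl⟩
      exact ⟨i, (hy i).symm⟩
    · rintro ⟨i, rfl⟩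
      exact ⟨y i, ⟨i, rfl⟩, hy i⟩
  have hbs : Submodule.span κ ((maximalIdeal Q).toCotangent '' (Set.range y)) = ⊤ := by
    rw [hrange]; exact b.span_eq
  have hk : Submodule.span (ResidueField Q)
      ((maximalIdeal Q).toCotangent '' (Set.range y)) = ⊤ :=
    (span_top_transfer σ hσ hsmul _).1 hbs
  have hQ : Submodule.span Q (Set.range y) = ⊤ :=
    (IsLocalRing.CotangentSpace.span_image_eq_top_iff).1 hk
  have hideal : Ideal.span (Subtype.val '' Set.range y) = maximalIdeal Q :=
    (span_subtype_top_iff' _ _).1 hQ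
  have hsset : (↑s : Set Q) = Subtype.val '' Set.range y := by
    simp only [s, Finset.coe_image, Finset.coe_univ, Set.image_univ]
    ext x
    simp [Set.range_comp]
  have : edim Q ≤ s.card := by
    apply Nat.sInf_le
    refine ⟨s, rfl, ?_⟩
    rw [nonunits_eq_coe_maximalIdeal, ← hideal, ← hsset]
  omega

end StmtAux

set_option maxHeartbeats 2000000 in
/-- `edim(R ×_T S) ≥ edim R + edim S − edim T`. -/
theorem stmt4 (R S T : Type) [CommRing R] [CommRing S] [CommRing T]
    [IsLocalRing R] [IsLocalRing S] [IsLocalRing T]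
    [IsNoetherianRing R] [IsNoetherianRing S] [IsNoetherianRing T]
    (eR : R →+* T) (eS : S →+* T)
    (hR : Function.Surjective eR) (hS : Function.Surjective eS)
    [IsLocalRing (fiberProd eR eS)] :
    edim R + edim S - edim T ≤ edim (fiberProd eR eS) := by
  classical
  have hprop : ∀ p : ↥(fiberProd eR eS), eR (p : R × S).1 = eS (p : R × S).2 := fun p => p.2
  have hmem : ∀ x : R × S, eR x.1 = eS x.2 → x ∈ fiberProd eR eS := fun x h => h
  set π1 : ↥(fiberProd eR eS) →+* R := (RingHom.fst R S).comp (fiberProd eR eS).subtype with hπ1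
  set π2 : ↥(fiberProd eR eS) →+* S := (RingHom.snd R S).comp (fiberProd eR eS).subtype with hπ2
  have hπ1app : ∀ p : ↥(fiberProd eR eS), π1 p = (p : R × S).1 := fun p => rfl
  have hπ2app : ∀ p : ↥(fiberProd eR eS), π2 p = (p : R × S).2 := fun p => rfl
  -- lifts
  have hlift1 : ∀ r : R, ∃ p : ↥(fiberProd eR eS), π1 p = r := by
    intro r
    obtain ⟨s0, hs0⟩ := hS (eR r)
    exact ⟨⟨(r, s0), hmem _ hs0.symm⟩, rfl⟩
  have hlift2 : ∀ s : S, ∃ p : ↥(fiberProd eR eS), π2 p = s := by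
    intro s
    obtain ⟨r0, hr0⟩ := hR (eS s)
    exact ⟨⟨(r0, s), hmem _ hr0⟩, rfl⟩
  have hπ1surj : Function.Surjective π1 := fun r => hlift1 r
  have hπ2surj : Function.Surjective π2 := fun s => hlift2 s
  -- units
  have hunit : ∀ p : ↥(fiberProd eR eS),
      IsUnit ((p : R × S).1) → IsUnit ((p : R × S).2) → IsUnit p := by
    rintro p ⟨u, hu⟩ ⟨w, hw⟩
    have hT' : eR ((↑u⁻¹ : R)) = eS ((↑w⁻¹ : S)) := by
      have h1 : eR (↑u⁻¹ : R) * eR (u : R) = 1 := by rw [← map_mul, Units.inv_mul, map_one]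
      have h2 : eS (w : S) * eS (↑w⁻¹ : S) = 1 := by rw [← map_mul, Units.mul_inv, map_one]
      have hT : eR (u : R) = eS (w : S) := by rw [hu, hw]; exact hprop p
      calc eR (↑u⁻¹ : R) = eR (↑u⁻¹ : R) * (eS (w : S) * eS (↑w⁻¹ : S)) := by rw [h2, mul_one]
        _ = (eR (↑u⁻¹ : R) * eR (u : R)) * eS (↑w⁻¹ : S) := by rw [← hT]; ring
        _ = eS (↑w⁻¹ : S) := by rw [h1, one_mul]
    refine IsUnit.of_mul_eq_one (a := p) ⟨((↑u⁻¹ : R), (↑w⁻¹ : S)), hmem _ hT'⟩ ?_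
    apply Subtype.ext
    have : ((p * ⟨((↑u⁻¹ : R), (↑w⁻¹ : S)), hmem _ hT'⟩ : ↥(fiberProd eR eS)) : R × S)
        = ((p : R × S).1 * ↑u⁻¹, (p : R × S).2 * ↑w⁻¹) := rfl
    rw [this]
    have h1 : (p : R × S).1 * ↑u⁻¹ = 1 := by rw [← hu]; exact u.mul_inv
    have h2 : (p : R × S).2 * ↑w⁻¹ = 1 := by rw [← hw]; exact w.mul_inv
    rw [h1, h2]
    rfl
  have hunit1 : ∀ p : ↥(fiberProd eR eS), IsUnit p ↔ IsUnit ((p : R × S).1) := by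
    intro p
    constructor
    · intro h
      exact h.map π1
    · intro h
      refine hunit p h (isUnit_of_isUnit_map' eS hS ?_)
      rw [← hprop p]
      exact h.map eR
  have hunit2 : ∀ p : ↥(fiberProd eR eS), IsUnit p ↔ IsUnit ((p : R × S).2) := by
    intro p
    constructor
    · intro h
      exact h.map π2
    · intro h
      refine hunit p (isUnit_of_isUnit_map' eR hR ?_) h
      rw [hprop p]
      exact h.map eS
  have hm1 : ∀ p : ↥(fiberProd eR eS),
      p ∈ maximalIdeal ↥(fiberProd eR eS) ↔ (p : R × S).1 ∈ maximalIdeal R := by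
    intro p
    rw [mem_maximalIdeal, mem_maximalIdeal, mem_nonunits_iff, mem_nonunits_iff]
    exact not_congr (hunit1 p)
  have hm2 : ∀ p : ↥(fiberProd eR eS),
      p ∈ maximalIdeal ↥(fiberProd eR eS) ↔ (p : R × S).2 ∈ maximalIdeal S := by
    intro p
    rw [mem_maximalIdeal, mem_maximalIdeal, mem_nonunits_iff, mem_nonunits_iff]
    exact not_congr (hunit2 p)
  -- generating finset for the maximal ideal of P
  have hexP : ∃ s : Finset ↥(fiberProd eR eS),
      Ideal.span (s : Set ↥(fiberProd eR eS)) = maximalIdeal ↥(fiberProd eR eS) := by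
    obtain ⟨A, hA⟩ : (maximalIdeal R).FG := IsNoetherian.noetherian _
    obtain ⟨G, hG⟩ : (RingHom.ker eS).FG := IsNoetherian.noetherian _
    classical
    choose liftA liftAspec using hlift1
    let q0 : S → ↥(fiberProd eR eS) := fun g =>
      if h : eS g = 0 then ⟨((0 : R), g), hmem _ (by rw [map_zero, h])⟩ else 1
    have hq0 : ∀ g ∈ RingHom.ker eS, ((q0 g : R × S)) = ((0 : R), g) := by
      intro g hg
      have hg' : eS g = 0 := hg
      simp only [q0, dif_pos hg']
    refine ⟨A.image liftA ∪ G.image q0, ?_⟩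
    apply le_antisymm
    · rw [Ideal.span_le]
      intro x hx
      rw [Finset.coe_union, Set.mem_union] at hx
      rcases hx with hx | hx
      · rw [Finset.coe_image] at hx
        obtain ⟨a, ha, rfl⟩ := hx
        rw [SetLike.mem_coe, hm1 _, ← hπ1app, liftAspec a, ← hA]
        exact Submodule.subset_span ha
      · rw [Finset.coe_image] at hx
        obtain ⟨g, hg, rfl⟩ := hx
        have hgk : g ∈ RingHom.ker eS := by rw [← hG]; exact Ideal.subset_span hg
        rw [SetLike.mem_coe, hm1 _]
        have : ((q0 g : R × S)).1 = 0 := by rw [hq0 g hgk]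
        rw [this]
        exact Submodule.zero_mem _
    · intro x hx
      -- first component
      have hx1 : (x : R × S).1 ∈ maximalIdeal R := (hm1 x).1 hx
      set I0 : Ideal ↥(fiberProd eR eS) := Ideal.span ↑(A.image liftA ∪ G.image q0) with hI0
      have hsub1 : maximalIdeal R ≤ Ideal.map π1 I0 := by
        rw [← hA, Ideal.span_le]
        intro a ha
        have : a = π1 (liftA a) := (liftAspec a).symm
        rw [SetLike.mem_coe, this]
        apply Ideal.mem_map_of_mem
        apply Ideal.subset_span
        rw [Finset.coe_union, Finset.coe_image]
        exact Set.mem_union_left _ ⟨a, ha, rfl⟩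
      obtain ⟨q, hq, hπq⟩ := (Ideal.mem_map_iff_of_surjective π1 hπ1surj).1 (hsub1 hx1)
      set y := x - q with hy
      have hy1 : (y : R × S).1 = 0 := by
        have : (y : R × S).1 = (x : R × S).1 - (q : R × S).1 := rfl
        rw [this, ← hπ1app q, hπq, sub_self]
      have hy2k : (y : R × S).2 ∈ RingHom.ker eS := by
        rw [RingHom.mem_ker, ← hprop y, hy1, map_zero]
      have hsub2 : RingHom.ker eS ≤ Ideal.map π2 (Ideal.span ↑(G.image q0)) := by
        rw [← hG, Ideal.span_le]
        intro g hg
        have hgk : g ∈ RingHom.ker eS := by rw [← hG]; exact Ideal.subset_span hg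
        have : g = π2 (q0 g) := by rw [hπ2app, hq0 g hgk]
        rw [SetLike.mem_coe, this]
        apply Ideal.mem_map_of_mem
        apply Ideal.subset_span
        rw [Finset.coe_image]
        exact ⟨g, hg, rfl⟩
      obtain ⟨q', hq', hπq'⟩ := (Ideal.mem_map_iff_of_surjective π2 hπ2surj).1 (hsub2 hy2k)
      have hker : Ideal.span ↑(G.image q0) ≤ RingHom.ker π1 := by
        rw [Ideal.span_le]
        intro z hz
        rw [Finset.coe_image] at hz
        obtain ⟨g, hg, rfl⟩ := hz
        have hgk : g ∈ RingHom.ker eS := by rw [← hG]; exact Ideal.subset_span hg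
        rw [SetLike.mem_coe, RingHom.mem_ker, hπ1app, hq0 g hgk]
      have hq'1 : (q' : R × S).1 = 0 := by
        have := hker hq'
        rwa [RingHom.mem_ker, hπ1app] at this
      have hq'y : q' = y := by
        apply Subtype.ext
        apply Prod.ext
        · rw [hq'1, hy1]
        · rw [← hπ2app q', hπq']
      have : x = q + q' := by rw [hq'y, hy]; ring
      rw [this]
      refine Ideal.add_mem _ hq ?_
      have : Ideal.span (↑(G.image q0) : Set ↥(fiberProd eR eS)) ≤ I0 := by
        apply Ideal.span_mono
        rw [Finset.coe_union]
        exact Set.subset_union_right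
      exact this hq'
  -- residue field maps
  set κ := ResidueField ↥(fiberProd eR eS) with hκ
  have hker1 : ∀ p ∈ maximalIdeal ↥(fiberProd eR eS), ((residue R).comp π1) p = 0 := by
    intro p hp
    have : π1 p ∈ maximalIdeal R := by rw [hπ1app]; exact (hm1 p).1 hp
    exact Ideal.Quotient.eq_zero_iff_mem.2 this
  set ρ1 : κ →+* ResidueField R :=
    Ideal.Quotient.lift (maximalIdeal ↥(fiberProd eR eS)) ((residue R).comp π1) hker1 with hρ1def
  have hρ1 : ∀ p : ↥(fiberProd eR eS), ρ1 (residue _ p) = residue R (π1 p) := fun p =>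
    Ideal.Quotient.lift_mk _ _ _
  have hρ1surj : Function.Surjective ρ1 := by
    intro c
    obtain ⟨r, hr⟩ := Ideal.Quotient.mk_surjective c
    obtain ⟨p, hp⟩ := hlift1 r
    exact ⟨residue _ p, by rw [hρ1, hp]; exact hr⟩
  have hker2 : ∀ p ∈ maximalIdeal ↥(fiberProd eR eS), ((residue S).comp π2) p = 0 := by
    intro p hp
    have : π2 p ∈ maximalIdeal S := by rw [hπ2app]; exact (hm2 p).1 hp
    exact Ideal.Quotient.eq_zero_iff_mem.2 this
  set ρ2 : κ →+* ResidueField S :=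
    Ideal.Quotient.lift (maximalIdeal ↥(fiberProd eR eS)) ((residue S).comp π2) hker2 with hρ2def
  have hρ2 : ∀ p : ↥(fiberProd eR eS), ρ2 (residue _ p) = residue S (π2 p) := fun p =>
    Ideal.Quotient.lift_mk _ _ _
  have hρ2surj : Function.Surjective ρ2 := by
    intro c
    obtain ⟨s, hs⟩ := Ideal.Quotient.mk_surjective c
    obtain ⟨p, hp⟩ := hlift2 s
    exact ⟨residue _ p, by rw [hρ2, hp]; exact hs⟩
  -- module instances
  letI : Module κ (CotangentSpace R) := Module.compHom _ ρ1
  letI : Module κ (CotangentSpace S) := Module.compHom _ ρ2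
  have hsm1 : ∀ (c : κ) (w : CotangentSpace R), c • w = ρ1 c • w := fun _ _ => rfl
  have hsm2 : ∀ (c : κ) (w : CotangentSpace S), c • w = ρ2 c • w := fun _ _ => rfl
  have hRsmul : ∀ (r : R) (w : CotangentSpace R), r • w = residue R r • w := by
    intro r w
    rw [← IsLocalRing.ResidueField.algebraMap_eq, algebraMap_smul]
  have hSsmul : ∀ (s : S) (w : CotangentSpace S), s • w = residue S s • w := by
    intro s w
    rw [← IsLocalRing.ResidueField.algebraMap_eq, algebraMap_smul]

  -- witnesses for edim P and edim T
  obtain ⟨sP, hsP⟩ := hexP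
  have hPne : {n : ℕ | ∃ s : Finset ↥(fiberProd eR eS), s.card = n ∧
      ((Ideal.span (s : Set ↥(fiberProd eR eS)) : Ideal ↥(fiberProd eR eS)) : Set ↥(fiberProd eR eS))
        = nonunits ↥(fiberProd eR eS)}.Nonempty := by
    refine ⟨sP.card, sP, rfl, ?_⟩
    rw [hsP]
    exact (nonunits_eq_coe_maximalIdeal _).symm
  obtain ⟨s, hscard, hsspan⟩ : ∃ s : Finset ↥(fiberProd eR eS),
      s.card = edim ↥(fiberProd eR eS) ∧
      ((Ideal.span (s : Set ↥(fiberProd eR eS)) : Ideal ↥(fiberProd eR eS)) : Set ↥(fiberProd eR eS))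
        = nonunits ↥(fiberProd eR eS) := Nat.sInf_mem hPne
  obtain ⟨t0, ht0⟩ : (maximalIdeal T).FG := IsNoetherian.noetherian _
  have hTne : {n : ℕ | ∃ t : Finset T, t.card = n ∧
      ((Ideal.span (t : Set T) : Ideal T) : Set T) = nonunits T}.Nonempty := by
    refine ⟨t0.card, t0, rfl, ?_⟩
    rw [ht0]
    exact (nonunits_eq_coe_maximalIdeal _).symm
  obtain ⟨t, htcard, htspan⟩ : ∃ t : Finset T, t.card = edim T ∧
      ((Ideal.span (t : Set T) : Ideal T) : Set T) = nonunits T := Nat.sInf_mem hTne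
  have hms : Ideal.span (s : Set ↥(fiberProd eR eS)) = maximalIdeal ↥(fiberProd eR eS) :=
    SetLike.coe_injective (by rw [hsspan, nonunits_eq_coe_maximalIdeal])
  have htm : Ideal.span (t : Set T) = maximalIdeal T :=
    SetLike.coe_injective (by rw [htspan, nonunits_eq_coe_maximalIdeal])
  have hsel : ∀ p ∈ s, p ∈ maximalIdeal ↥(fiberProd eR eS) := fun p hp =>
    hms ▸ Ideal.subset_span hp
  -- the map to the product of cotangent spaces
  let c1 : ∀ p : ↥(fiberProd eR eS), p ∈ maximalIdeal ↥(fiberProd eR eS) → ↥(maximalIdeal R) :=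
    fun p h => ⟨(p : R × S).1, (hm1 p).1 h⟩
  let c2 : ∀ p : ↥(fiberProd eR eS), p ∈ maximalIdeal ↥(fiberProd eR eS) → ↥(maximalIdeal S) :=
    fun p h => ⟨(p : R × S).2, (hm2 p).1 h⟩
  let Φf : ↥(fiberProd eR eS) → CotangentSpace R × CotangentSpace S := fun p =>
    if h : p ∈ maximalIdeal ↥(fiberProd eR eS) then
      ((maximalIdeal R).toCotangent (c1 p h), (maximalIdeal S).toCotangent (c2 p h)) else 0
  have hΦ1 : ∀ (p : ↥(fiberProd eR eS)) (h : p ∈ maximalIdeal ↥(fiberProd eR eS)),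
      Φf p = ((maximalIdeal R).toCotangent (c1 p h), (maximalIdeal S).toCotangent (c2 p h)) :=
    fun p h => dif_pos h
  let v : {x // x ∈ s} → CotangentSpace R × CotangentSpace S := fun x => Φf x.1
  have hΦspan : ∀ x ∈ Ideal.span (s : Set ↥(fiberProd eR eS)),
      Φf x ∈ Submodule.span κ (Set.range v) := by
    intro x hx
    induction hx using Submodule.span_induction with
    | mem p hp =>
        have : Φf p = v ⟨p, hp⟩ := rfl
        rw [this]
        exact Submodule.subset_span ⟨⟨p, hp⟩, rfl⟩
    | zero =>
        have hz : (0 : ↥(fiberProd eR eS)) ∈ maximalIdeal ↥(fiberProd eR eS) :=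
          Submodule.zero_mem _
        have h0 : Φf 0 = 0 := by
          rw [hΦ1 0 hz]
          have e1 : c1 0 hz = 0 := Subtype.ext rfl
          have e2 : c2 0 hz = 0 := Subtype.ext rfl
          rw [e1, e2, map_zero, map_zero]
          rfl
        rw [h0]
        exact Submodule.zero_mem _
    | add x y hx hy ihx ihy =>
        have mx : x ∈ maximalIdeal ↥(fiberProd eR eS) := hms ▸ hx
        have my : y ∈ maximalIdeal ↥(fiberProd eR eS) := hms ▸ hy
        have mxy : x + y ∈ maximalIdeal ↥(fiberProd eR eS) := Submodule.add_mem _ mx my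
        have h0 : Φf (x + y) = Φf x + Φf y := by
          rw [hΦ1 x mx, hΦ1 y my, hΦ1 (x + y) mxy]
          have e1 : c1 (x + y) mxy = c1 x mx + c1 y my := Subtype.ext rfl
          have e2 : c2 (x + y) mxy = c2 x mx + c2 y my := Subtype.ext rfl
          rw [e1, e2, map_add, map_add]
          rfl
        rw [h0]
        exact Submodule.add_mem _ ihx ihy
    | smul a x hx ih =>
        have mx : x ∈ maximalIdeal ↥(fiberProd eR eS) := hms ▸ hx
        have max' : a • x ∈ maximalIdeal ↥(fiberProd eR eS) := Submodule.smul_mem _ a mx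
        have h0 : Φf (a • x) = residue ↥(fiberProd eR eS) a • Φf x := by
          rw [hΦ1 x mx, hΦ1 (a • x) max']
          have e1 : c1 (a • x) max' = π1 a • c1 x mx := Subtype.ext rfl
          have e2 : c2 (a • x) max' = π2 a • c2 x mx := Subtype.ext rfl
          rw [e1, e2, LinearMap.map_smul, LinearMap.map_smul]
          rw [hRsmul, hSsmul, ← hρ1 a, ← hρ2 a, ← hsm1, ← hsm2]
          rfl
        rw [h0]
        exact Submodule.smul_mem _ _ ih
  -- first components generate the maximal ideal of R
  have himg : Ideal.span (⇑π1 '' (s : Set ↥(fiberProd eR eS))) = maximalIdeal R := by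
    rw [← Ideal.map_span, hms]
    apply le_antisymm
    · rw [Ideal.map_le_iff_le_comap]
      intro p hp
      rw [Ideal.mem_comap, hπ1app]
      exact (hm1 p).1 hp
    · intro r hr
      obtain ⟨p, hp⟩ := hlift1 r
      have hpmem : p ∈ maximalIdeal ↥(fiberProd eR eS) := by
        rw [hm1 p, ← hπ1app, hp]
        exact hr
      exact hp ▸ Ideal.mem_map_of_mem π1 hpmem
  have hX1span : Submodule.span R
      {z : ↥(maximalIdeal R) | (z : R) ∈ ⇑π1 '' (s : Set ↥(fiberProd eR eS))} = ⊤ := by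
    rw [span_subtype_top_iff']
    have : Subtype.val '' {z : ↥(maximalIdeal R) | (z : R) ∈ ⇑π1 '' (s : Set ↥(fiberProd eR eS))}
        = ⇑π1 '' (s : Set ↥(fiberProd eR eS)) := by
      apply le_antisymm
      · rintro r ⟨z, hz, rfl⟩
        exact hz
      · rintro r hr
        obtain ⟨p, hp, rfl⟩ := hr
        have : π1 p ∈ maximalIdeal R := by
          rw [hπ1app]
          exact (hm1 p).1 (hsel p hp)
        exact ⟨⟨π1 p, this⟩, ⟨p, hp, rfl⟩, rfl⟩
    rw [this, himg]
  have hcot1span : Submodule.span (ResidueField R) ((maximalIdeal R).toCotangent ''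
      {z : ↥(maximalIdeal R) | (z : R) ∈ ⇑π1 '' (s : Set ↥(fiberProd eR eS))}) = ⊤ :=
    (IsLocalRing.CotangentSpace.span_image_eq_top_iff).2 hX1span
  have hκ1span : Submodule.span κ ((maximalIdeal R).toCotangent ''
      {z : ↥(maximalIdeal R) | (z : R) ∈ ⇑π1 '' (s : Set ↥(fiberProd eR eS))}) = ⊤ :=
    (span_top_transfer ρ1 hρ1surj hsm1 _).2 hcot1span
  have h1 : Submodule.map (LinearMap.fst κ (CotangentSpace R) (CotangentSpace S))
      (Submodule.span κ (Set.range v)) = ⊤ := by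
    refine eq_top_iff.2 ?_
    rw [← hκ1span, Submodule.span_le]
    rintro w ⟨z, hz, rfl⟩
    obtain ⟨p, hp, hpz⟩ := hz
    have hpm : p ∈ maximalIdeal ↥(fiberProd eR eS) := hsel p hp
    have hz1 : z = c1 p hpm := Subtype.ext (by rw [← hpz, hπ1app])
    rw [hz1]
    have hval : (maximalIdeal R).toCotangent (c1 p hpm)
        = (LinearMap.fst κ (CotangentSpace R) (CotangentSpace S)) (v ⟨p, hp⟩) := by
      show _ = (v ⟨p, hp⟩).1
      rw [show v ⟨p, hp⟩ = Φf p from rfl, hΦ1 p hpm]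
    rw [hval]
    exact Submodule.mem_map_of_mem (Submodule.subset_span ⟨⟨p, hp⟩, rfl⟩)
  -- the submodule K
  set K : Submodule κ (CotangentSpace S) := Submodule.span κ ((maximalIdeal S).toCotangent ''
      {z : ↥(maximalIdeal S) | eS (z : S) = 0}) with hKdef
  have h2 : ∀ w ∈ K, ((0 : CotangentSpace R), w) ∈ Submodule.span κ (Set.range v) := by
    intro w hw
    induction hw using Submodule.span_induction with
    | mem w hw =>
        obtain ⟨z, hz, rfl⟩ := hw
        have hp0mem : ((0 : R), (z : S)) ∈ fiberProd eR eS := hmem _ (by rw [map_zero, hz])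
        set p0 : ↥(fiberProd eR eS) := ⟨((0 : R), (z : S)), hp0mem⟩ with hp0def
        have hp0m : p0 ∈ maximalIdeal ↥(fiberProd eR eS) := by
          rw [hm1 p0]
          exact Submodule.zero_mem _
        have hp0s : p0 ∈ Ideal.span (s : Set ↥(fiberProd eR eS)) := by rw [hms]; exact hp0m
        have := hΦspan p0 hp0s
        have hΦp0 : Φf p0 = ((0 : CotangentSpace R), (maximalIdeal S).toCotangent z) := by
          rw [hΦ1 p0 hp0m]
          have e1 : c1 p0 hp0m = 0 := Subtype.ext rfl
          have e2 : c2 p0 hp0m = z := Subtype.ext rfl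
          rw [e1, e2, map_zero]
        rw [hΦp0] at this
        exact this
    | zero =>
        have : ((0 : CotangentSpace R), (0 : CotangentSpace S))
            = (0 : CotangentSpace R × CotangentSpace S) := rfl
        rw [this]
        exact Submodule.zero_mem _
    | add w w' hw hw' ihw ihw' =>
        have : ((0 : CotangentSpace R), w + w')
            = ((0 : CotangentSpace R), w) + ((0 : CotangentSpace R), w') := by
          rw [Prod.mk_add_mk, add_zero]
        rw [this]
        exact Submodule.add_mem _ ihw ihw'
    | smul c w hw ihw =>
        have : ((0 : CotangentSpace R), c • w) = c • ((0 : CotangentSpace R), w) := by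
          rw [Prod.smul_mk, smul_zero]
        rw [this]
        exact Submodule.smul_mem _ _ ihw
  -- finite dimensionality
  haveI hfd1 : Module.Finite κ (CotangentSpace R) := moduleFinite_transfer ρ1 hρ1surj hsm1
  haveI hfd2 : Module.Finite κ (CotangentSpace S) := moduleFinite_transfer ρ2 hρ2surj hsm2
  have e3 : finrank κ (CotangentSpace R) + finrank κ K ≤ edim ↥(fiberProd eR eS) := by
    have := la1' v K h1 h2
    rwa [Fintype.card_coe, hscard] at this
  -- the U side
  have hS' := hS
  choose w0 hw0 using hS'
  have hWsub : ∀ x ∈ t.image w0, x ∈ maximalIdeal S := by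
    intro x hx
    obtain ⟨c, hc, rfl⟩ := Finset.mem_image.1 hx
    have hcm : c ∈ maximalIdeal T := htm ▸ Ideal.subset_span hc
    rw [mem_maximalIdeal, mem_nonunits_iff]
    intro hu
    have := hu.map eS
    rw [hw0 c] at this
    exact (mem_nonunits_iff.1 ((mem_maximalIdeal c).1 hcm)) this

  let u : {x // x ∈ t.image w0} → CotangentSpace S := fun x =>
    (maximalIdeal S).toCotangent ⟨x.1, hWsub x.1 x.2⟩
  set U : Submodule κ (CotangentSpace S) := Submodule.span κ (Set.range u) with hUdef
  have hspanW : Ideal.span (↑(t.image w0) : Set S) ≤ maximalIdeal S :=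
    Ideal.span_le.2 (fun x hx => hWsub x hx)
  have hXWval : Subtype.val '' {z : ↥(maximalIdeal S) | (z : S) ∈ (↑(t.image w0) : Set S)}
      = (↑(t.image w0) : Set S) := by
    apply le_antisymm
    · rintro x ⟨z, hz, rfl⟩
      exact hz
    · rintro x hx
      exact ⟨⟨x, hWsub x hx⟩, hx, rfl⟩
  have hrangeu : (maximalIdeal S).toCotangent ''
      {z : ↥(maximalIdeal S) | (z : S) ∈ (↑(t.image w0) : Set S)} = Set.range u := by
    apply le_antisymm
    · rintro w ⟨z, hz, rfl⟩
      refine ⟨⟨z.1, hz⟩, ?_⟩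
      show (maximalIdeal S).toCotangent ⟨z.1, hWsub z.1 hz⟩ = _
      exact congrArg _ (Subtype.ext rfl)
    · rintro w ⟨x, rfl⟩
      exact ⟨⟨x.1, hWsub x.1 x.2⟩, x.2, rfl⟩
  have hKU : K ⊔ U = ⊤ := by
    apply Submodule.eq_top_iff'.2
    intro χ
    obtain ⟨y, rfl⟩ := (maximalIdeal S).toCotangent_surjective χ
    have hyT : eS (y : S) ∈ maximalIdeal T := by
      rw [mem_maximalIdeal, mem_nonunits_iff]
      intro hu2
      exact mem_nonunits_iff.1 ((mem_maximalIdeal _).1 y.2) (isUnit_of_isUnit_map' eS hS hu2)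
    have hsubT : maximalIdeal T ≤ Ideal.map eS (Ideal.span (↑(t.image w0) : Set S)) := by
      rw [← htm, Ideal.span_le]
      intro c hc
      rw [SetLike.mem_coe, ← hw0 c]
      exact Ideal.mem_map_of_mem eS
        (Ideal.subset_span (Finset.mem_coe.2 (Finset.mem_image_of_mem w0 hc)))
    obtain ⟨z, hz, hze⟩ := (Ideal.mem_map_iff_of_surjective eS hS).1 (hsubT hyT)
    have hzs : z ∈ maximalIdeal S := hspanW hz
    have hj : eS ((y : S) - z) = 0 := by rw [map_sub, hze, sub_self]
    have hjm : (y : S) - z ∈ maximalIdeal S := Submodule.sub_mem _ y.2 hzs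
    have hdecomp : (maximalIdeal S).toCotangent y
        = (maximalIdeal S).toCotangent ⟨(y : S) - z, hjm⟩
          + (maximalIdeal S).toCotangent ⟨z, hzs⟩ := by
      rw [← map_add]
      congr 1
      apply Subtype.ext
      show (y : S) = ((y : S) - z) + z
      ring
    have hKmem : (maximalIdeal S).toCotangent ⟨(y : S) - z, hjm⟩ ∈ K :=
      Submodule.subset_span ⟨⟨(y : S) - z, hjm⟩, hj, rfl⟩
    have hUmem : (maximalIdeal S).toCotangent ⟨z, hzs⟩ ∈ U := by
      have hz1 : (⟨z, hzs⟩ : ↥(maximalIdeal S)) ∈ Submodule.span S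
          {z' : ↥(maximalIdeal S) | (z' : S) ∈ (↑(t.image w0) : Set S)} := by
        rw [mem_span_subtype', hXWval]
        exact hz
      have hz2 : (maximalIdeal S).toCotangent ⟨z, hzs⟩ ∈ Submodule.span S
          ((maximalIdeal S).toCotangent ''
            {z' : ↥(maximalIdeal S) | (z' : S) ∈ (↑(t.image w0) : Set S)}) := by
        rw [← Submodule.map_span]
        exact Submodule.mem_map_of_mem hz1
      have hz3 : (maximalIdeal S).toCotangent ⟨z, hzs⟩ ∈ Submodule.span (ResidueField S)
          ((maximalIdeal S).toCotangent ''
            {z' : ↥(maximalIdeal S) | (z' : S) ∈ (↑(t.image w0) : Set S)}) :=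
        (mem_span_transfer (residue S) Ideal.Quotient.mk_surjective hSsmul _ _).1 hz2
      have hz4 : (maximalIdeal S).toCotangent ⟨z, hzs⟩ ∈ Submodule.span κ
          ((maximalIdeal S).toCotangent ''
            {z' : ↥(maximalIdeal S) | (z' : S) ∈ (↑(t.image w0) : Set S)}) :=
        (mem_span_transfer ρ2 hρ2surj hsm2 _ _).2 hz3
      rw [hUdef, ← hrangeu]
      exact hz4
    rw [hdecomp]
    exact Submodule.add_mem _ (Submodule.mem_sup_left hKmem) (Submodule.mem_sup_right hUmem)
  have e4 : finrank κ (CotangentSpace S) ≤ finrank κ K + finrank κ U := la2' K U hKU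
  have e5 : finrank κ U ≤ edim T := by
    have h5 := finrank_range_le_card (R := κ) u
    rw [Fintype.card_coe] at h5
    calc finrank κ U = finrank κ (Submodule.span κ (Set.range u)) := by rw [hUdef]
      _ ≤ (t.image w0).card := h5
      _ ≤ t.card := Finset.card_image_le
      _ = edim T := htcard
  have e1 : edim R ≤ finrank κ (CotangentSpace R) := edim_le_finrank_compat ρ1 hρ1surj hsm1
  have e2 : edim S ≤ finrank κ (CotangentSpace S) := edim_le_finrank_compat ρ2 hρ2surj hsm2
  rw [tsub_le_iff_right]
  omega
end
end

section
/- Let ε_R : R → T ← S : ε_S be surjective homomorphisms of commutative noetherian local rings with common residue field. Then dim(R ×_T S) = max{dim R, dim S}, and min{dim R, dim S} ≥ dim T, where dim denotes Krull dimension. -/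
open RingTheory.Sequence Function

noncomputable section

/-- If `π : A →+* B` is surjective and `p` is a chain of primes of `A` all containing
`ker π`, then the length of `p` is at most `ringKrullDim B`. -/
lemma auxChainLe {A B : Type*} [CommRing A] [CommRing B] (π : A →+* B)
    (hπ : Function.Surjective π) (p : LTSeries (PrimeSpectrum A))
    (h : ∀ i, RingHom.ker π ≤ (p i).asIdeal) :
    (p.length : WithBot ℕ∞) ≤ ringKrullDim B := by
  have hprime : ∀ i, (Ideal.map π (p i).asIdeal).IsPrime := fun i =>
    Ideal.map_isPrime_of_surjective hπ (by simpa [RingHom.ker_eq_comap_bot] using h i)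
  have hcm : ∀ i, Ideal.comap π (Ideal.map π (p i).asIdeal) = (p i).asIdeal := by
    intro i
    rw [Ideal.comap_map_of_surjective π hπ, sup_eq_left]
    simpa [RingHom.ker_eq_comap_bot] using h i
  let q : LTSeries (PrimeSpectrum B) :=
    { length := p.length
      toFun := fun i => ⟨Ideal.map π (p i).asIdeal, hprime i⟩
      step := by
        intro i
        have hlt : (p i.castSucc).asIdeal < (p i.succ).asIdeal := p.step i
        refine lt_of_le_of_ne (Ideal.map_mono hlt.le) ?_
        intro heq
        have : (p i.castSucc).asIdeal = (p i.succ).asIdeal := by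
          rw [← hcm i.castSucc, ← hcm i.succ]
          exact congrArg (Ideal.comap π) heq
        exact hlt.ne this }
  exact Order.LTSeries.length_le_krullDim q

lemma auxSurjFst {R S T : Type*} [CommRing R] [CommRing S] [CommRing T]
    (eR : R →+* T) (eS : S →+* T) (hS : Function.Surjective eS) :
    Function.Surjective ((RingHom.fst R S).comp (fiberProd eR eS).subtype) := by
  intro r
  obtain ⟨s, hs⟩ := hS (eR r)
  exact ⟨⟨(r, s), hs.symm⟩, rfl⟩

lemma auxSurjSnd {R S T : Type*} [CommRing R] [CommRing S] [CommRing T]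
    (eR : R →+* T) (eS : S →+* T) (hR : Function.Surjective eR) :
    Function.Surjective ((RingHom.snd R S).comp (fiberProd eR eS).subtype) := by
  intro s
  obtain ⟨r, hr⟩ := hR (eS s)
  exact ⟨⟨(r, s), hr⟩, rfl⟩

/-- `dim(R ×_T S) = max{dim R, dim S}` and `min{dim R, dim S} ≥ dim T`. -/
theorem stmt5 (R S T : Type) [CommRing R] [CommRing S] [CommRing T]
    [IsLocalRing R] [IsLocalRing S] [IsLocalRing T]
    [IsNoetherianRing R] [IsNoetherianRing S] [IsNoetherianRing T]
    (eR : R →+* T) (eS : S →+* T)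
    (hR : Function.Surjective eR) (hS : Function.Surjective eS) :
    ringKrullDim (fiberProd eR eS) = max (ringKrullDim R) (ringKrullDim S) ∧
    ringKrullDim T ≤ min (ringKrullDim R) (ringKrullDim S) := by
  set P := fiberProd eR eS
  set piR : P →+* R := (RingHom.fst R S).comp P.subtype with hpiR
  set piS : P →+* S := (RingHom.snd R S).comp P.subtype with hpiS
  have hsR : Function.Surjective piR := auxSurjFst eR eS hS
  have hsS : Function.Surjective piS := auxSurjSnd eR eS hR
  have hTl : ringKrullDim T ≤ min (ringKrullDim R) (ringKrullDim S) :=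
    le_min (ringKrullDim_le_of_surjective eR hR) (ringKrullDim_le_of_surjective eS hS)
  refine ⟨le_antisymm ?_ (max_le (ringKrullDim_le_of_surjective piR hsR)
    (ringKrullDim_le_of_surjective piS hsS)), hTl⟩
  -- upper bound
  have hmul : RingHom.ker piR * RingHom.ker piS = ⊥ := by
    rw [eq_bot_iff]
    rw [Ideal.mul_le]
    intro x hx y hy
    rw [RingHom.mem_ker] at hx hy
    have hx' : (x : R × S).1 = 0 := hx
    have hy' : (y : R × S).2 = 0 := hy
    have : ((x * y : P) : R × S) = 0 := by
      ext
      · show (x : R × S).1 * (y : R × S).1 = 0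
        rw [hx', zero_mul]
      · show (x : R × S).2 * (y : R × S).2 = 0
        rw [hy', mul_zero]
    exact Ideal.mem_bot.mpr (Subtype.ext this)
  show Order.krullDim (PrimeSpectrum P) ≤ _
  rw [Order.krullDim]
  apply iSup_le
  intro p
  rcases ((p.head).isPrime.mul_le).mp (hmul ▸ bot_le : RingHom.ker piR * RingHom.ker piS ≤ (p.head).asIdeal) with hk | hk
  · exact le_max_of_le_left (auxChainLe piR hsR p (fun i => hk.trans (p.monotone (Fin.zero_le i) : p.head ≤ p i)))
  · exact le_max_of_le_right (auxChainLe piS hsS p (fun i => hk.trans (p.monotone (Fin.zero_le i) : p.head ≤ p i)))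
end
end
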